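/- arXiv:2501.17106 — 2 statements merged into one kernel-verified Lean document; each statement's English description precedes it below -/
import Mathlib

section
/- Let x_0 < x_1 < ... < x_r be equally spaced nodes with spacing h = x_{j+1} - x_j, and let u_0, ..., u_r be nodal values. For 1 ≤ k ≤ r let p_k be the polynomial of degree at most k interpolating u on a stencil of k+1 consecutive nodes {x_{i_k}, ..., x_{i_k+k}}, and define I_k = (1/r) ∑_{ℓ=1}^{k} ∫_{x_0}^{x_r} h^{2ℓ-1} (p_k^{(ℓ)}(x))² dx. Then I_k ≥ (1/r) ∑_{i=1}^{r} (p_k(x_i) - p_k(x_{i-1}))² for any polynomial p_k and in particular, when p_k interpolates at all nodes x_0,...,x_r with values u_0,...,u_r (case k = r), I_r ≥ min_{1≤j≤r} (u_j - u_{j-1})². -/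
open Finset intervalIntegral MeasureTheory

lemma cs_interval (f : ℝ → ℝ) (hf : Continuous f) (a b : ℝ) (hab : a ≤ b) :
    (∫ x in a..b, f x) ^ 2 ≤ (b - a) * ∫ x in a..b, (f x) ^ 2 := by
  set φ : ℝ → ℝ := fun t => (t - a) * (∫ x in a..t, (f x) ^ 2) - (∫ x in a..t, f x) ^ 2 with hφ
  have hF : ∀ t, HasDerivAt (fun u => ∫ x in a..u, f x) (f t) t := fun t =>
    (hf.integral_hasStrictDerivAt a t).hasDerivAt
  have hF2 : ∀ t, HasDerivAt (fun u => ∫ x in a..u, (f x) ^ 2) ((f t) ^ 2) t := fun t =>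
    ((hf.pow 2).integral_hasStrictDerivAt a t).hasDerivAt
  have hφd : ∀ t, HasDerivAt φ
      ((∫ x in a..t, (f x) ^ 2) + (t - a) * (f t) ^ 2
        - 2 * (∫ x in a..t, f x) * f t) t := by
    intro t
    have h1 : HasDerivAt (fun u : ℝ => u - a) 1 t := (hasDerivAt_id t).sub_const a
    have h2 := (h1.mul (hF2 t)).sub ((hF t).pow 2)
    exact h2.congr_deriv (by simp)
  have hmono : MonotoneOn φ (Set.Icc a b) := by
    apply monotoneOn_of_deriv_nonneg (convex_Icc a b)
    · exact Continuous.continuousOn (by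
        apply Continuous.sub
        · exact (continuous_id.sub continuous_const).mul
            (intervalIntegral.continuous_primitive
              (fun c d => (hf.pow 2).intervalIntegrable c d) a)
        · exact (intervalIntegral.continuous_primitive
            (fun c d => hf.intervalIntegrable c d) a).pow 2)
    · exact fun t _ => (hφd t).differentiableAt.differentiableWithinAt
    · intro t ht
      rw [interior_Icc] at ht
      rw [(hφd t).deriv]
      have key : (∫ x in a..t, (f x - f t) ^ 2)
          = (∫ x in a..t, (f x) ^ 2) + (t - a) * (f t) ^ 2 - 2 * (∫ x in a..t, f x) * f t := by
        have e1 : ∀ x : ℝ, (f x - f t) ^ 2 = (f x) ^ 2 - 2 * f t * f x + (f t) ^ 2 := by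
          intro x; ring
        simp_rw [e1]
        rw [intervalIntegral.integral_add ((show Continuous fun x => f x ^ 2 - 2 * f t * f x from (hf.pow 2).sub
              ((continuous_const.mul hf))).intervalIntegrable _ _)
            (continuous_const.intervalIntegrable _ _),
          intervalIntegral.integral_sub ((show Continuous fun x => f x ^ 2 from hf.pow 2).intervalIntegrable _ _)
            ((show Continuous fun x => 2 * f t * f x from continuous_const.mul hf).intervalIntegrable _ _),
          intervalIntegral.integral_const_mul, intervalIntegral.integral_const,
          smul_eq_mul]
        ring
      rw [← key]
      exact intervalIntegral.integral_nonneg ht.1.le (fun x _ => sq_nonneg _)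
  have h0 : φ a = 0 := by simp [hφ]
  have := hmono (Set.left_mem_Icc.2 hab) (Set.right_mem_Icc.2 hab) hab
  rw [h0] at this
  simpa [hφ, sub_nonneg] using this

theorem smoothness_indicator_lower_bound (r : ℕ) (hr : 0 < r) (k : ℕ)
    (hk1 : 1 ≤ k) (hkr : k ≤ r) (x0 h : ℝ) (hh : 0 < h)
    (p : Polynomial ℝ) (u : ℕ → ℝ) :
    ((1 : ℝ) / r) *
        ∑ l ∈ Finset.Icc 1 k,
          ∫ x in x0..(x0 + r * h),
            h ^ (2 * l - 1) * ((Polynomial.derivative^[l] p).eval x) ^ 2 ≥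
      ((1 : ℝ) / r) *
        ∑ i ∈ Finset.Icc 1 r,
          (p.eval (x0 + i * h) - p.eval (x0 + (i - 1 : ℕ) * h)) ^ 2 ∧
    (k = r → (∀ j ≤ r, p.eval (x0 + j * h) = u j) →
      ((1 : ℝ) / r) *
          ∑ l ∈ Finset.Icc 1 r,
            ∫ x in x0..(x0 + r * h),
              h ^ (2 * l - 1) * ((Polynomial.derivative^[l] p).eval x) ^ 2 ≥
        (Finset.Icc 1 r).inf' (Finset.nonempty_Icc.2 hr)
          (fun j => (u j - u (j - 1)) ^ 2)) := by
  have hrpos : (0 : ℝ) < r := by exact_mod_cast hr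
  have hinv : (0 : ℝ) ≤ 1 / r := by positivity
  set f : ℝ → ℝ := fun x => (Polynomial.derivative p).eval x with hf
  have hfc : Continuous f := (Polynomial.derivative p).continuous
  -- the key inequality for general k
  have key : ∀ m : ℕ, 1 ≤ m →
      ∑ i ∈ Finset.Icc 1 r,
          (p.eval (x0 + i * h) - p.eval (x0 + (i - 1 : ℕ) * h)) ^ 2 ≤
      ∑ l ∈ Finset.Icc 1 m,
          ∫ x in x0..(x0 + r * h),
            h ^ (2 * l - 1) * ((Polynomial.derivative^[l] p).eval x) ^ 2 := by
    intro m hm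
    have hle : x0 ≤ x0 + r * h := by nlinarith
    have hnn : ∀ l ∈ Finset.Icc 1 m,
        (0 : ℝ) ≤ ∫ x in x0..(x0 + r * h),
          h ^ (2 * l - 1) * ((Polynomial.derivative^[l] p).eval x) ^ 2 := by
      intro l _
      exact intervalIntegral.integral_nonneg hle (fun x _ => by positivity)
    have h1 : (∫ x in x0..(x0 + r * h), h ^ (2 * 1 - 1) * ((Polynomial.derivative^[1] p).eval x) ^ 2)
        ≤ ∑ l ∈ Finset.Icc 1 m,
          ∫ x in x0..(x0 + r * h),
            h ^ (2 * l - 1) * ((Polynomial.derivative^[l] p).eval x) ^ 2 :=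
      Finset.single_le_sum hnn (Finset.mem_Icc.2 ⟨le_refl 1, hm⟩)
    refine le_trans ?_ h1
    -- decompose the l = 1 integral over subintervals
    set a : ℕ → ℝ := fun i => x0 + i * h with ha
    have hsplit : ∑ i ∈ Finset.range r, ∫ x in a i..a (i+1), h * (f x) ^ 2
        = ∫ x in (a 0)..(a r), h * (f x) ^ 2 := by
      apply intervalIntegral.sum_integral_adjacent_intervals
      intro i _
      exact ((continuous_const.mul (hfc.pow 2)).intervalIntegrable _ _)
    have hterm : ∀ i : ℕ,
        (p.eval (a (i+1)) - p.eval (a i)) ^ 2 ≤ ∫ x in a i..a (i+1), h * (f x) ^ 2 := by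
      intro i
      have hab : a i ≤ a (i+1) := by
        simp only [ha]
        push_cast
        nlinarith
      have hftc : (∫ x in a i..a (i+1), f x) = p.eval (a (i+1)) - p.eval (a i) := by
        apply intervalIntegral.integral_eq_sub_of_hasDerivAt (f := fun x => p.eval x)
        · exact fun x _ => p.hasDerivAt x
        · exact hfc.intervalIntegrable _ _
      have hcs := cs_interval f hfc (a i) (a (i+1)) hab
      rw [hftc] at hcs
      have hd : a (i+1) - a i = h := by simp only [ha]; push_cast; ring
      rw [hd] at hcs
      rw [intervalIntegral.integral_const_mul]
      exact hcs
    have hsum : ∑ i ∈ Finset.Icc 1 r,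
          (p.eval (x0 + i * h) - p.eval (x0 + (i - 1 : ℕ) * h)) ^ 2
        = ∑ i ∈ Finset.range r, (p.eval (a (i+1)) - p.eval (a i)) ^ 2 := by
      rw [show Finset.Icc 1 r = Finset.Ico 1 (r+1) by rw [Finset.Ico_add_one_right_eq_Icc],
        Finset.sum_Ico_eq_sum_range]
      apply Finset.sum_congr (by norm_num)
      intro i _
      simp only [ha, Nat.add_sub_cancel_left]
      push_cast
      ring_nf
    rw [hsum]
    calc ∑ i ∈ Finset.range r, (p.eval (a (i+1)) - p.eval (a i)) ^ 2
        ≤ ∑ i ∈ Finset.range r, ∫ x in a i..a (i+1), h * (f x) ^ 2 :=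
          Finset.sum_le_sum fun i _ => hterm i
      _ = ∫ x in (a 0)..(a r), h * (f x) ^ 2 := hsplit
      _ = ∫ x in x0..(x0 + r * h), h ^ (2 * 1 - 1) * ((Polynomial.derivative^[1] p).eval x) ^ 2 := by
          simp [ha, hf, intervalIntegral.integral_const_mul]
  constructor
  · exact mul_le_mul_of_nonneg_left (key k hk1) hinv
  · intro hkeq hu
    set M := (Finset.Icc 1 r).inf' (Finset.nonempty_Icc.2 hr)
        (fun j => (u j - u (j - 1)) ^ 2) with hM
    have hMle : ∀ i ∈ Finset.Icc 1 r, M ≤ (p.eval (x0 + i * h) - p.eval (x0 + (i - 1 : ℕ) * h)) ^ 2 := by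
      intro i hi
      obtain ⟨hi1, hir⟩ := Finset.mem_Icc.1 hi
      rw [hu i hir, hu (i - 1) (le_trans (Nat.sub_le i 1) hir)]
      exact Finset.inf'_le _ hi
    have hsum2 : (r : ℝ) * M ≤ ∑ i ∈ Finset.Icc 1 r,
        (p.eval (x0 + i * h) - p.eval (x0 + (i - 1 : ℕ) * h)) ^ 2 := by
      have := Finset.sum_le_sum hMle
      rwa [Finset.sum_const, Nat.card_Icc, Nat.add_sub_cancel, nsmul_eq_mul] at this
    have := key r hr
    have hfinal : (r : ℝ) * M ≤ ∑ l ∈ Finset.Icc 1 r,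
        ∫ x in x0..(x0 + r * h),
          h ^ (2 * l - 1) * ((Polynomial.derivative^[l] p).eval x) ^ 2 :=
      le_trans hsum2 this
    have := mul_le_mul_of_nonneg_left hfinal hinv
    calc M = (1 / r) * ((r : ℝ) * M) := by field_simp
      _ ≤ _ := this
end

section
/- If r_0 = 1, then for each 1 ≤ k ≤ r the ratio α_k = I_1 / I_k satisfies 0 ≤ α_k ≤ 1, where I_1 = min over consecutive pairs of (u_j - u_{j-1})² (up to the factor 1/r) and I_k = (1/r) ∑_{ℓ=1}^{k} ∫_{x_0}^{x_r} h^{2ℓ-1} (p_k^{(ℓ)}(x))² dx with p_k interpolating the data on a stencil of k+1 consecutive equally spaced nodes containing the relevant nodes; more precisely, I_k ≥ (1/r) min_{1≤j≤r} (u_j - u_{j-1})² whenever p_k(x_j) = u_j for all j = 0,...,r. -/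
open Finset intervalIntegral

/-- Cauchy–Schwarz for interval integrals of continuous functions. -/
lemma cs_integral (a b : ℝ) (hab : a ≤ b) (f : ℝ → ℝ) (hf : Continuous f) :
    (∫ x in a..b, f x) ^ 2 ≤ (b - a) * ∫ x in a..b, (f x) ^ 2 := by
  rcases eq_or_lt_of_le hab with rfl | hlt
  · simp
  · set I := ∫ x in a..b, f x with hI
    set J := ∫ x in a..b, (f x) ^ 2 with hJ
    have hba : (0:ℝ) < b - a := sub_pos.2 hlt
    set c : ℝ := I / (b - a) with hc
    have hint1 : IntervalIntegrable f MeasureTheory.volume a b := hf.intervalIntegrable a b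
    have hint2 : IntervalIntegrable (fun x => (f x) ^ 2) MeasureTheory.volume a b :=
      (hf.pow 2).intervalIntegrable a b
    have h0 : 0 ≤ ∫ x in a..b, (f x - c) ^ 2 :=
      intervalIntegral.integral_nonneg hab (fun x _ => sq_nonneg _)
    have hexp : (∫ x in a..b, (f x - c) ^ 2) = J - 2 * c * I + c ^ 2 * (b - a) := by
      have heq : ∀ x, (f x - c) ^ 2 = ((f x) ^ 2 - (2 * c) * f x) + c ^ 2 := by
        intro x; ring
      simp_rw [heq]
      rw [intervalIntegral.integral_add (hint2.sub (hint1.const_mul _))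
          intervalIntegrable_const,
        intervalIntegral.integral_sub hint2 (hint1.const_mul _),
        intervalIntegral.integral_const_mul, intervalIntegral.integral_const]
      simp [smul_eq_mul]
      ring
    rw [hexp, hc] at h0
    have h1 : 2 * (I / (b - a)) * I = 2 * I ^ 2 / (b - a) := by ring
    have h2 : (I / (b - a)) ^ 2 * (b - a) = I ^ 2 / (b - a) := by
      field_simp
    rw [h1, h2] at h0
    have h2' : 2 * I ^ 2 / (b - a) = 2 * (I ^ 2 / (b - a)) := by ring
    have h3 : I ^ 2 / (b - a) ≤ J := by linarith
    have := (div_le_iff₀ hba).mp h3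
    linarith [this]

theorem alpha_k_bounded (r : ℕ) (hr : 0 < r) (k : ℕ) (hk1 : 1 ≤ k)
    (hkr : k ≤ r) (x0 h : ℝ) (hh : 0 < h) (p : Polynomial ℝ) (u : ℕ → ℝ)
    (hinterp : ∀ j ≤ r, p.eval (x0 + j * h) = u j) :
    ((1 : ℝ) / r) * (Finset.Icc 1 r).inf' (Finset.nonempty_Icc.2 hr)
        (fun j => (u j - u (j - 1)) ^ 2) ≤
      ((1 : ℝ) / r) *
        ∑ l ∈ Finset.Icc 1 k,
          ∫ x in x0..(x0 + r * h),
            h ^ (2 * l - 1) * ((Polynomial.derivative^[l] p).eval x) ^ 2 := by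
  have hru : (1:ℝ) ≤ (r:ℝ) := by exact_mod_cast hr
  apply mul_le_mul_of_nonneg_left _ (by positivity)
  set q := Polynomial.derivative p with hq
  set a := x0 with ha
  set b := x0 + h with hb
  set c := x0 + (r:ℝ) * h with hc
  have hab : a ≤ b := by simp [ha, hb]; linarith
  have hbc : b ≤ c := by
    simp only [ha, hb, hc]
    nlinarith
  have hac : a ≤ c := le_trans hab hbc
  have hqc : Continuous fun x => q.eval x := q.continuous
  -- FTC
  have ftc : (∫ x in a..b, q.eval x) = p.eval b - p.eval a :=
    intervalIntegral.integral_eq_sub_of_hasDerivAt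
      (fun x _ => p.hasDerivAt x) (hqc.intervalIntegrable a b)
  have hu0 : p.eval a = u 0 := by
    have := hinterp 0 (Nat.zero_le r)
    simpa [ha] using this
  have hu1 : p.eval b = u 1 := by
    have := hinterp 1 (le_trans hk1 hkr)
    simpa [hb] using this
  -- step 1: inf ≤ (u 1 - u 0)^2
  have h1mem : (1:ℕ) ∈ Finset.Icc 1 r := Finset.mem_Icc.mpr ⟨le_refl 1, hr⟩
  have step1 : (Finset.Icc 1 r).inf' (Finset.nonempty_Icc.2 hr)
      (fun j => (u j - u (j - 1)) ^ 2) ≤ (u 1 - u 0) ^ 2 := by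
    exact Finset.inf'_le (fun j => (u j - u (j - 1)) ^ 2) h1mem
  -- step 2: Cauchy–Schwarz
  have step2 : (u 1 - u 0) ^ 2 ≤ h * ∫ x in a..b, (q.eval x) ^ 2 := by
    have hcs := cs_integral a b hab (fun x => q.eval x) hqc
    rw [ftc, hu0, hu1] at hcs
    have : b - a = h := by simp [ha, hb]
    rwa [this] at hcs
  -- step 3: extend integral to whole interval
  have hint2ab : IntervalIntegrable (fun x => (q.eval x) ^ 2) MeasureTheory.volume a b :=
    (hqc.pow 2).intervalIntegrable a b
  have hint2bc : IntervalIntegrable (fun x => (q.eval x) ^ 2) MeasureTheory.volume b c :=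
    (hqc.pow 2).intervalIntegrable b c
  have hsplit : (∫ x in a..b, (q.eval x) ^ 2) + (∫ x in b..c, (q.eval x) ^ 2)
      = ∫ x in a..c, (q.eval x) ^ 2 :=
    intervalIntegral.integral_add_adjacent_intervals hint2ab hint2bc
  have hnn : 0 ≤ ∫ x in b..c, (q.eval x) ^ 2 :=
    intervalIntegral.integral_nonneg hbc (fun x _ => sq_nonneg _)
  have step3 : h * (∫ x in a..b, (q.eval x) ^ 2) ≤ h * ∫ x in a..c, (q.eval x) ^ 2 := by
    apply mul_le_mul_of_nonneg_left _ hh.le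
    linarith [hsplit, hnn]
  -- step 4: identify with the l = 1 term
  have step4 : h * (∫ x in a..c, (q.eval x) ^ 2)
      = ∫ x in a..c, h ^ (2 * 1 - 1) * ((Polynomial.derivative^[1] p).eval x) ^ 2 := by
    rw [intervalIntegral.integral_const_mul]
    norm_num [hq]
  -- step 5: one term ≤ sum
  have step5 : (∫ x in a..c, h ^ (2 * 1 - 1) * ((Polynomial.derivative^[1] p).eval x) ^ 2)
      ≤ ∑ l ∈ Finset.Icc 1 k,
          ∫ x in a..c, h ^ (2 * l - 1) * ((Polynomial.derivative^[l] p).eval x) ^ 2 := by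
    apply Finset.single_le_sum
        (f := fun l => ∫ x in a..c, h ^ (2 * l - 1) * ((Polynomial.derivative^[l] p).eval x) ^ 2)
    · intro l _
      apply intervalIntegral.integral_nonneg hac
      intro x _
      positivity
    · simp [hk1]
  calc (Finset.Icc 1 r).inf' (Finset.nonempty_Icc.2 hr) (fun j => (u j - u (j - 1)) ^ 2)
      ≤ (u 1 - u 0) ^ 2 := step1
    _ ≤ h * ∫ x in a..b, (q.eval x) ^ 2 := step2
    _ ≤ h * ∫ x in a..c, (q.eval x) ^ 2 := step3
    _ = ∫ x in a..c, h ^ (2 * 1 - 1) * ((Polynomial.derivative^[1] p).eval x) ^ 2 := step4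
    _ ≤ _ := step5
end
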